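/- Let ħ > 0 and m > 0 be constants, let V : ℝ × ℝ → ℝ be continuous, and let Ψ : ℝ × ℝ → ℂ be twice continuously differentiable and satisfy the Schrödinger equation i·ħ·∂_t Ψ(x,t) = −(ħ²/(2m))·∂_x² Ψ(x,t) + V(x,t)·Ψ(x,t) for all (x,t). Let ξ : ℝ → ℝ be twice continuously differentiable, and define the transformed wave function Ψ̃(x,t) = Ψ(x − ξ(t), t) · exp( (i·m/ħ) · ( ξ'(t)·x − (1/2)·∫_0^t ξ'(s)² ds ) ). Then Ψ̃ satisfies i·ħ·∂_t Ψ̃(x,t) = −(ħ²/(2m))·∂_x² Ψ̃(x,t) + Ṽ(x,t)·Ψ̃(x,t) for all (x,t), where Ṽ(x,t) = V(x − ξ(t), t) − m·ξ''(t)·x. -/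

import Mathlib

open Complex intervalIntegral

set_option maxHeartbeats 1000000

/-- Covariance of the Schrödinger equation under the extended Galilean transformation
`x̃ = x + ξ(t)` (one spatial dimension): if `Ψ` solves `ihbar ∂_t Ψ = −(hbar²/2m) ∂_x² Ψ + VΨ`,
then the transformed wave function
`Ψ̃(x,t) = Ψ(x − ξ(t), t) · exp((i m/hbar)(ξ'(t)·x − ½∫₀ᵗ ξ'(s)² ds))`
solves the Schrödinger equation with the transformed potential
`Ṽ(x,t) = V(x − ξ(t), t) − m·ξ''(t)·x`.
Functions of two variables are curried, `F x t`; `∂_t F (x,t) = deriv (F x) t`,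
`∂_x F (x,t) = deriv (fun y => F y t) x`. -/
theorem schrodinger_covariant_extended_galilean
    (hbar m : ℝ) (hbar_pos : 0 < hbar) (hm : 0 < m)
    (V : ℝ → ℝ → ℝ) (hV : Continuous (Function.uncurry V))
    (Ψ : ℝ → ℝ → ℂ) (hΨ : ContDiff ℝ 2 (Function.uncurry Ψ))
    (hSE : ∀ x t, Complex.I * (hbar : ℂ) * deriv (fun s => Ψ x s) t
        = -((hbar : ℂ) ^ 2 / (2 * (m : ℂ))) * deriv (deriv (fun y => Ψ y t)) x
          + (V x t : ℂ) * Ψ x t)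
    (ξ : ℝ → ℝ) (hξ : ContDiff ℝ 2 ξ)
    (Ψt : ℝ → ℝ → ℂ)
    (hΨt : ∀ x t, Ψt x t = Ψ (x - ξ t) t
        * Complex.exp (Complex.I * ((m / hbar) *
            (deriv ξ t * x - (1 / 2) * ∫ s in (0 : ℝ)..t, (deriv ξ s) ^ 2) : ℝ)))
    (Vt : ℝ → ℝ → ℝ)
    (hVt : ∀ x t, Vt x t = V (x - ξ t) t - m * deriv (deriv ξ) t * x) :
    ∀ x t, Complex.I * (hbar : ℂ) * deriv (fun s => Ψt x s) t
        = -((hbar : ℂ) ^ 2 / (2 * (m : ℂ))) * deriv (deriv (fun y => Ψt y t)) x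
          + (Vt x t : ℂ) * Ψt x t := by
  intro x t
  -- basic regularity
  have hΨd : Differentiable ℝ (Function.uncurry Ψ) := hΨ.differentiable (by norm_num)
  set D : ℝ × ℝ → (ℝ × ℝ →L[ℝ] ℂ) := fderiv ℝ (Function.uncurry Ψ) with hDdef
  have hΨ2 : ContDiff ℝ ((1:ℕ)+1) (Function.uncurry Ψ) := by exact_mod_cast hΨ
  have hD : ContDiff ℝ 1 D := (contDiff_succ_iff_fderiv.mp hΨ2).2.2
  have hDd : Differentiable ℝ D := hD.differentiable (by norm_num)
  have hξ2 : ContDiff ℝ ((1:ℕ)+1) ξ := by exact_mod_cast hξ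
  have hξ' : ContDiff ℝ 1 (deriv ξ) := (contDiff_succ_iff_deriv.mp hξ2).2.2
  have hξd : Differentiable ℝ ξ := hξ.differentiable (by norm_num)
  have hξ'd : Differentiable ℝ (deriv ξ) := hξ'.differentiable (by norm_num)
  -- partial derivative abbreviations
  set Ψx : ℝ → ℝ → ℂ := fun a b => D (a, b) (1, 0) with hΨxdef
  set Ψτ : ℝ → ℝ → ℂ := fun a b => D (a, b) (0, 1) with hΨτdef
  set Ψxx : ℝ → ℝ → ℂ := fun a b => fderiv ℝ D (a, b) (1, 0) (1, 0) with hΨxxdef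
  -- HasDerivAt facts for Ψ
  have hx : ∀ a b, HasDerivAt (fun y => Ψ y b) (Ψx a b) a := by
    intro a b
    have hline : HasDerivAt (fun y : ℝ => (y, b)) ((1 : ℝ), (0 : ℝ)) a :=
      (hasDerivAt_id a).prodMk (hasDerivAt_const a b)
    exact ((hΨd (a, b)).hasFDerivAt.comp_hasDerivAt a hline)
  have ht : ∀ a b, HasDerivAt (fun s => Ψ a s) (Ψτ a b) b := by
    intro a b
    have hline : HasDerivAt (fun s : ℝ => (a, s)) ((0 : ℝ), (1 : ℝ)) b :=
      (hasDerivAt_const b a).prodMk (hasDerivAt_id b)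
    exact ((hΨd (a, b)).hasFDerivAt.comp_hasDerivAt b hline)
  have hxx : ∀ a b, HasDerivAt (fun y => Ψx y b) (Ψxx a b) a := by
    intro a b
    have hline : HasDerivAt (fun y : ℝ => (y, b)) ((1 : ℝ), (0 : ℝ)) a :=
      (hasDerivAt_id a).prodMk (hasDerivAt_const a b)
    have hDc : HasDerivAt (fun y : ℝ => D (y, b)) (fderiv ℝ D (a, b) (1, 0)) a :=
      (hDd (a, b)).hasFDerivAt.comp_hasDerivAt a hline
    have := hDc.clm_apply (hasDerivAt_const a ((1:ℝ), (0:ℝ)))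
    simpa using this
  -- rewrite hSE in terms of the abbreviations
  have hSE' : ∀ a b, Complex.I * (hbar : ℂ) * Ψτ a b
      = -((hbar : ℂ) ^ 2 / (2 * (m : ℂ))) * Ψxx a b + (V a b : ℂ) * Ψ a b := by
    intro a b
    have e1 : deriv (fun s => Ψ a s) b = Ψτ a b := (ht a b).deriv
    have e2 : deriv (fun y => Ψ y b) = fun y => Ψx y b := funext fun y => (hx y b).deriv
    have e3 : deriv (deriv (fun y => Ψ y b)) a = Ψxx a b := by
      rw [e2]; exact (hxx a b).deriv
    rw [← e1, ← e3]; exact hSE a b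
  -- constants
  set u : ℝ := x - ξ t with hu
  set p : ℝ := deriv ξ t with hp
  set q : ℝ := deriv (deriv ξ) t with hq
  set k : ℝ := m / hbar with hk
  -- derivative of ξ and ξ'
  have hξt : HasDerivAt ξ p t := hξd t |>.hasDerivAt
  have hξ't : HasDerivAt (deriv ξ) q t := hξ'd t |>.hasDerivAt
  -- derivative of the integral
  have hcont : Continuous (fun s => (deriv ξ s) ^ 2) := (hξ'.continuous).pow 2
  have hint : HasDerivAt (fun r => ∫ s in (0:ℝ)..r, (deriv ξ s) ^ 2) (p ^ 2) t := by
    exact intervalIntegral.integral_hasDerivAt_right (hcont.intervalIntegrable 0 t)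
      (hcont.stronglyMeasurableAtFilter _ _) hcont.continuousAt
  -- the common phase factor
  set Et : ℂ := Complex.exp (Complex.I *
      ((m / hbar) * (deriv ξ t * x - (1 / 2) * ∫ s in (0 : ℝ)..t, (deriv ξ s) ^ 2) : ℝ))
    with hEt
  set C : ℝ := ∫ s in (0 : ℝ)..t, (deriv ξ s) ^ 2 with hC
  ----------------------------------------------------------------
  -- time derivative of Ψt x
  ----------------------------------------------------------------
  have hθt : HasDerivAt (fun s => ((m / hbar) *
      (deriv ξ s * x - (1 / 2) * ∫ r in (0:ℝ)..s, (deriv ξ r) ^ 2) : ℝ))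
      (k * (q * x - (1/2) * p ^ 2)) t := by
    exact ((hξ't.mul_const x).sub (hint.const_mul (1/2))).const_mul (m / hbar)
  have hexpT : HasDerivAt (fun s => Complex.exp (Complex.I *
        ((m / hbar) * (deriv ξ s * x - (1 / 2) * ∫ r in (0:ℝ)..s, (deriv ξ r) ^ 2) : ℝ)))
      (Et * (Complex.I * ((k * (q * x - (1/2) * p ^ 2) : ℝ) : ℂ))) t := by
    have h1 : HasDerivAt (fun s => (((m / hbar) *
        (deriv ξ s * x - (1 / 2) * ∫ r in (0:ℝ)..s, (deriv ξ r) ^ 2) : ℝ) : ℂ))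
        ((k * (q * x - (1/2) * p ^ 2) : ℝ) : ℂ) t := hθt.ofReal_comp
    have h2 := (h1.const_mul Complex.I).cexp
    simpa [hEt, mul_comm, mul_left_comm] using h2
  have hcurve : HasDerivAt (fun s => Ψ (x - ξ s) s) ((-p : ℂ) * Ψx u t + Ψτ u t) t := by
    have hline : HasDerivAt (fun s : ℝ => (x - ξ s, s)) ((0 - p : ℝ), (1 : ℝ)) t :=
      ((hasDerivAt_const t x).sub hξt).prodMk (hasDerivAt_id t)
    have h : HasDerivAt (fun s => Ψ (x - ξ s) s) (D (u, t) ((0 - p : ℝ), (1 : ℝ))) t :=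
      HasFDerivAt.comp_hasDerivAt (f := fun s : ℝ => (x - ξ s, s))
        t (hΨd (x - ξ t, t)).hasFDerivAt hline
    have e : D (u, t) ((0 - p : ℝ), (1 : ℝ)) = (-p : ℂ) * Ψx u t + Ψτ u t := by
      have h0 : ((0 - p : ℝ), (1 : ℝ)) = (-p : ℝ) • ((1:ℝ), (0:ℝ)) + ((0:ℝ), (1:ℝ)) := by
        simp [Prod.ext_iff]
      rw [h0, map_add, map_smul]
      simp [hΨxdef, hΨτdef, Complex.real_smul]
    rw [← e]; exact h
  have hDT : deriv (fun s => Ψt x s) t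
      = ((-p : ℂ) * Ψx u t + Ψτ u t) * Et
        + Ψ u t * (Et * (Complex.I * ((k * (q * x - (1/2) * p ^ 2) : ℝ) : ℂ))) := by
    have hfun : (fun s => Ψt x s) = fun s => Ψ (x - ξ s) s * Complex.exp (Complex.I *
        ((m / hbar) * (deriv ξ s * x - (1 / 2) * ∫ r in (0:ℝ)..s, (deriv ξ r) ^ 2) : ℝ)) := by
      funext s; exact hΨt x s
    rw [hfun]
    have := (hcurve.fun_mul hexpT).deriv
    simpa [hEt, hu] using this
  ----------------------------------------------------------------
  -- spatial derivatives of Ψt · t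
  ----------------------------------------------------------------
  set c : ℂ := Complex.I * ((k * p : ℝ) : ℂ) with hc
  have hexpX : ∀ y : ℝ, HasDerivAt (fun z : ℝ => Complex.exp (Complex.I *
        ((m / hbar) * (deriv ξ t * z - (1 / 2) * C) : ℝ)))
      (Complex.exp (Complex.I * ((m / hbar) * (deriv ξ t * y - (1 / 2) * C) : ℝ)) * c) y := by
    intro y
    have h0 : HasDerivAt (fun z : ℝ => ((m / hbar) * (deriv ξ t * z - (1 / 2) * C) : ℝ))
        (k * p) y := by
      have := ((hasDerivAt_id y).const_mul (deriv ξ t)).sub_const ((1/2) * C)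
      simpa [hk, hp, mul_comm] using this.const_mul (m / hbar)
    have h2 := ((h0.ofReal_comp).const_mul Complex.I).cexp
    simpa [hc, mul_comm, mul_left_comm] using h2
  set E : ℝ → ℂ := fun y => Complex.exp (Complex.I *
      ((m / hbar) * (deriv ξ t * y - (1 / 2) * C) : ℝ)) with hE
  have hEx : E x = Et := by rw [hE, hEt, hC]
  set g : ℝ → ℂ := fun y => Ψx (y - ξ t) t * E y + Ψ (y - ξ t) t * (E y * c) with hg
  have hg1 : ∀ y : ℝ, HasDerivAt (fun z => Ψt z t) (g y) y := by
    intro y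
    have hfun : (fun z => Ψt z t) = fun z => Ψ (z - ξ t) t * E z := by
      funext z; rw [hΨt z t, hE, hC]
    rw [hfun]
    have hline : HasDerivAt (fun z : ℝ => (z - ξ t, t)) ((1:ℝ), (0:ℝ)) y :=
      ((hasDerivAt_id y).sub_const (ξ t)).prodMk (hasDerivAt_const y t)
    have h1 : HasDerivAt (fun z : ℝ => Ψ (z - ξ t) t) (Ψx (y - ξ t) t) y :=
      HasFDerivAt.comp_hasDerivAt (f := fun z : ℝ => (z - ξ t, t)) y (hΨd (y - ξ t, t)).hasFDerivAt hline
    have := h1.fun_mul (hexpX y)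
    simpa [hg, hE] using this
  have hgd : HasDerivAt g
      ((Ψxx u t * E x + Ψx u t * (E x * c))
        + ((Ψx u t * (E x * c)) + Ψ u t * ((E x * c) * c))) x := by
    have hline : HasDerivAt (fun z : ℝ => (z - ξ t, t)) ((1:ℝ), (0:ℝ)) x :=
      ((hasDerivAt_id x).sub_const (ξ t)).prodMk (hasDerivAt_const x t)
    have h1 : HasDerivAt (fun z : ℝ => Ψx (z - ξ t) t) (Ψxx u t) x := by
      have hDc : HasDerivAt (fun z : ℝ => D (z - ξ t, t)) (fderiv ℝ D (u, t) (1, 0)) x :=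
        (hDd (u, t)).hasFDerivAt.comp_hasDerivAt x hline
      have := hDc.clm_apply (hasDerivAt_const x ((1:ℝ), (0:ℝ)))
      simpa using this
    have h1' : HasDerivAt (fun z : ℝ => Ψ (z - ξ t) t) (Ψx u t) x :=
      HasFDerivAt.comp_hasDerivAt (f := fun z : ℝ => (z - ξ t, t)) x (hΨd (u, t)).hasFDerivAt hline
    have hEc : HasDerivAt (fun y => E y * c) ((E x * c) * c) x := by
      have := (hexpX x).mul_const c
      simpa [hE, mul_assoc, mul_comm, mul_left_comm] using this
    have hA := h1.fun_mul (hexpX x)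
    have hB := h1'.fun_mul hEc
    have := hA.fun_add hB
    simpa [hg, hE, hu, mul_assoc, mul_comm, mul_left_comm] using this
  have hDDX : deriv (deriv (fun y => Ψt y t)) x
      = (Ψxx u t * Et + Ψx u t * (Et * c))
        + ((Ψx u t * (Et * c)) + Ψ u t * ((Et * c) * c)) := by
    have e2 : deriv (fun y => Ψt y t) = g := funext fun y => (hg1 y).deriv
    rw [e2, hgd.deriv, hEx]
  ----------------------------------------------------------------
  -- algebra
  ----------------------------------------------------------------
  have hPsit : Ψt x t = Ψ u t * Et := by rw [hΨt x t]
  rw [hDT, hDDX, hPsit, hVt x t, hc]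
  have hhbar : (hbar : ℂ) ≠ 0 := Complex.ofReal_ne_zero.mpr (ne_of_gt hbar_pos)
  have hmne : (m : ℂ) ≠ 0 := Complex.ofReal_ne_zero.mpr (ne_of_gt hm)
  have hSEu := hSE' u t
  rw [show x - ξ t = u from hu.symm, show deriv (deriv ξ) t = q from hq.symm]
  push_cast
  have h1 : (hbar : ℂ) * ((k : ℝ) : ℂ) = (m : ℂ) := by
    rw [hk]; push_cast; field_simp
  have hd : ((hbar : ℂ) ^ 2 / (2 * (m : ℂ))) * (2 * ((k : ℝ) : ℂ)) = (hbar : ℂ) := by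
    rw [hk]; push_cast; field_simp
  linear_combination Et * hSEu
    + (Complex.I * (p : ℝ) * Ψx u t * Et
        - (1/2) * ((k : ℝ) : ℂ) * ((p : ℝ) : ℂ) ^ 2 * Ψ u t * Et) * hd
    - (Ψ u t * Et * ((q : ℝ) : ℂ) * ((x : ℝ) : ℂ)) * h1
    + ((hbar : ℂ) * ((k : ℝ) : ℂ) * Ψ u t * Et * ((q : ℝ) : ℂ) * ((x : ℝ) : ℂ)
        - (1/2) * (hbar : ℂ) * ((k : ℝ) : ℂ) * Ψ u t * Et * ((p : ℝ) : ℂ) ^ 2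
        + ((hbar : ℂ) ^ 2 / (2 * (m : ℂ))) * ((k : ℝ) : ℂ) ^ 2 * ((p : ℝ) : ℂ) ^ 2
            * Ψ u t * Et) * Complex.I_sq
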